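/- Let q ≥ 5 be an integer and let K, K' be integers with 1 ≤ K, K' ≤ ⌊q/2⌋. Let C ≥ 0 be a real number. Then for every integer k with K ≤ k ≤ q − K and every integer k' with K' ≤ k' ≤ q − K', one has sin(kπ/q)·sin(k'π/q)·C − cos(kπ/q)·cos(k'π/q) ≥ sin(Kπ/q)·sin(K'π/q)·C − cos(Kπ/q)·cos(K'π/q). -/

import Mathlib

open Real

lemma aux_sin_cos (y x : ℝ) (hy0 : 0 ≤ y) (hy : y ≤ π/2) (h1 : y ≤ x) (h2 : x ≤ π - y) :
    Real.sin y ≤ Real.sin x ∧ |Real.cos x| ≤ Real.cos y := by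
  have hpi := Real.pi_pos
  constructor
  · rcases le_or_gt x (π/2) with hx | hx
    · exact Real.sin_le_sin_of_le_of_le_pi_div_two (by linarith) hx h1
    · have : Real.sin x = Real.sin (π - x) := (Real.sin_pi_sub x).symm
      rw [this]
      exact Real.sin_le_sin_of_le_of_le_pi_div_two (by linarith) (by linarith) (by linarith)
  · rcases le_or_gt x (π/2) with hx | hx
    · have h0 : 0 ≤ Real.cos x := Real.cos_nonneg_of_mem_Icc ⟨by linarith, hx⟩
      rw [abs_of_nonneg h0]
      exact Real.cos_le_cos_of_nonneg_of_le_pi hy0 (by linarith) h1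
    · have h0 : Real.cos x ≤ 0 := Real.cos_nonpos_of_pi_div_two_le_of_le hx.le (by linarith)
      rw [abs_of_nonpos h0, ← Real.cos_pi_sub]
      exact Real.cos_le_cos_of_nonneg_of_le_pi hy0 (by linarith) (by linarith)

theorem stmt_5 (q K K' : ℕ) (hq : 5 ≤ q)
    (hK : 1 ≤ K) (hKq : K ≤ q / 2) (hK' : 1 ≤ K') (hK'q : K' ≤ q / 2)
    (C : ℝ) (hC : 0 ≤ C)
    (k k' : ℕ) (hk1 : K ≤ k) (hk2 : k ≤ q - K) (hk'1 : K' ≤ k') (hk'2 : k' ≤ q - K') :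
    Real.sin (k * π / q) * Real.sin (k' * π / q) * C
        - Real.cos (k * π / q) * Real.cos (k' * π / q)
      ≥ Real.sin (K * π / q) * Real.sin (K' * π / q) * C
        - Real.cos (K * π / q) * Real.cos (K' * π / q) := by
  have hpi := Real.pi_pos
  have hq0 : (0:ℝ) < q := by positivity
  have h2K : 2 * K ≤ q := by omega
  have h2K' : 2 * K' ≤ q := by omega
  have hKle : K ≤ q := by omega
  have hK'le : K' ≤ q := by omega
  have hkq : (k:ℝ) ≤ q - K := by
    have : (k:ℝ) ≤ ((q - K : ℕ) : ℝ) := by exact_mod_cast hk2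
    rwa [Nat.cast_sub hKle] at this
  have hk'q : (k':ℝ) ≤ q - K' := by
    have : (k':ℝ) ≤ ((q - K' : ℕ) : ℝ) := by exact_mod_cast hk'2
    rwa [Nat.cast_sub hK'le] at this
  have key : ∀ (A a : ℕ), 1 ≤ A → 2 * A ≤ q → A ≤ a → (a:ℝ) ≤ q - A →
      Real.sin (A * π / q) ≤ Real.sin (a * π / q) ∧
      |Real.cos (a * π / q)| ≤ Real.cos (A * π / q) := by
    intro A a hA h2A hAa haq
    apply aux_sin_cos
    · positivity
    · rw [div_le_div_iff₀ hq0 two_pos]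
      have : (2:ℝ) * A ≤ q := by exact_mod_cast h2A
      nlinarith
    · have : (A:ℝ) ≤ a := by exact_mod_cast hAa
      gcongr
    · calc (a:ℝ) * π / q ≤ ((q:ℝ) - A) * π / q := by gcongr
        _ = π - A * π / q := by field_simp
  obtain ⟨hs, hc⟩ := key K k hK h2K hk1 hkq
  obtain ⟨hs', hc'⟩ := key K' k' hK' h2K' hk'1 hk'q
  have hsa : 0 ≤ Real.sin (K * π / q) := Real.sin_nonneg_of_nonneg_of_le_pi (by positivity)
    (by have hr : (K:ℝ) ≤ q := by exact_mod_cast hKle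
        rw [div_le_iff₀ hq0]; nlinarith)
  have hsa' : 0 ≤ Real.sin (K' * π / q) := Real.sin_nonneg_of_nonneg_of_le_pi (by positivity)
    (by have hr : (K':ℝ) ≤ q := by exact_mod_cast hK'le
        rw [div_le_iff₀ hq0]; nlinarith)
  have hsin : Real.sin (K * π / q) * Real.sin (K' * π / q) * C
      ≤ Real.sin (k * π / q) * Real.sin (k' * π / q) * C :=
    mul_le_mul_of_nonneg_right (mul_le_mul hs hs' hsa' (le_trans hsa hs)) hC
  have hcos : Real.cos (k * π / q) * Real.cos (k' * π / q)
      ≤ Real.cos (K * π / q) * Real.cos (K' * π / q) := by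
    calc Real.cos (k * π / q) * Real.cos (k' * π / q)
        ≤ |Real.cos (k * π / q) * Real.cos (k' * π / q)| := le_abs_self _
      _ = |Real.cos (k * π / q)| * |Real.cos (k' * π / q)| := abs_mul _ _
      _ ≤ Real.cos (K * π / q) * Real.cos (K' * π / q) :=
          mul_le_mul hc hc' (abs_nonneg _) (le_trans (abs_nonneg _) hc)
  linarith
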